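/- If X, Y, Z are independent Exp(1) random variables and δ ∈ ℝ, then the random variable L = min{X, δ + Y + Z} has probability density l ↦ Q(δ,l), where Q(δ,l) = e^{−l}e^{δ}(l−δ) if l < 0 and δ ≤ l; Q(δ,l) = e^{−l}e^{−(l−δ)}(1 + 2(l−δ)) if l ≥ 0 and δ ≤ l; Q(δ,l) = e^{−l} if l ≥ 0 and δ > l; and Q(δ,l) = 0 otherwise. -/

import Mathlib

open Real MeasureTheory ProbabilityTheory

/-- The density of `min{X, δ+Y+Z}`. -/
noncomputable def Qden (δ l : ℝ) : ℝ :=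
  if l < 0 then (if δ ≤ l then exp (-l) * exp δ * (l - δ) else 0)
  else if δ ≤ l then exp (-l) * exp (-(l - δ)) * (1 + 2 * (l - δ))
  else exp (-l)

open Set

section Aux

lemma Qden_nonneg (δ l : ℝ) : 0 ≤ Qden δ l := by
  unfold Qden
  split_ifs with h1 h2 h3
  · exact mul_nonneg (by positivity) (by linarith)
  · exact le_refl _
  · exact mul_nonneg (by positivity) (by linarith)
  · positivity

lemma Qden_measurable (δ : ℝ) : Measurable (Qden δ) := by
  unfold Qden
  refine Measurable.ite (measurableSet_lt measurable_id measurable_const) ?_ ?_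
  · exact Measurable.ite (measurableSet_le measurable_const measurable_id) (by fun_prop)
      (by fun_prop)
  · exact Measurable.ite (measurableSet_le measurable_const measurable_id) (by fun_prop)
      (by fun_prop)

lemma Qden_abs_bound (δ l : ℝ) :
    |Qden δ l| ≤ exp (-l) * exp |δ| * (1 + 2 * (|l| + |δ|)) := by
  have e1 : exp δ ≤ exp |δ| := exp_le_exp.2 (le_abs_self δ)
  have hl1 := le_abs_self l
  have hl2 := neg_abs_le l
  have hd1 := le_abs_self δ
  have hd2 := neg_abs_le δ
  unfold Qden
  split_ifs with h1 h2 h3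
  · rw [abs_of_nonneg (mul_nonneg (by positivity) (by linarith))]
    exact mul_le_mul (mul_le_mul_of_nonneg_left e1 (exp_pos (-l)).le)
      (by linarith) (by linarith) (by positivity)
  · simp only [abs_zero]; positivity
  · rw [abs_of_nonneg (mul_nonneg (by positivity) (by linarith))]
    refine mul_le_mul (mul_le_mul_of_nonneg_left ?_ (exp_pos (-l)).le)
      (by linarith) (by linarith) (by positivity)
    exact exp_le_exp.2 (by push_neg at h1; linarith)
  · rw [abs_of_nonneg (exp_pos (-l)).le]
    have h5 : (1:ℝ) ≤ exp |δ| * (1 + 2 * (|l| + |δ|)) := by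
      nlinarith [one_le_exp (abs_nonneg δ)]
    nlinarith [mul_le_mul_of_nonneg_left h5 (exp_pos (-l)).le]

lemma Qden_integrableOn (δ a b : ℝ) : IntegrableOn (Qden δ) (Icc a b) := by
  refine Measure.integrableOn_of_bounded (measure_Icc_lt_top).ne
    ((Qden_measurable δ).aestronglyMeasurable)
    (M := exp (-a) * exp |δ| * (1 + 2 * (|a| + |b| + |δ|)))
    (((ae_restrict_iff' measurableSet_Icc).2 (ae_of_all _ fun l hl => ?_)))
  obtain ⟨h1, h2⟩ := hl
  rw [Real.norm_eq_abs]
  refine le_trans (Qden_abs_bound δ l) ?_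
  have hl1 : |l| ≤ |a| + |b| := by
    rw [abs_le]
    constructor
    · calc -(|a| + |b|) ≤ -|a| := by nlinarith [abs_nonneg (b:ℝ)]
        _ ≤ a := neg_abs_le a
        _ ≤ l := h1
    · calc l ≤ b := h2
        _ ≤ |b| := le_abs_self b
        _ ≤ |a| + |b| := by nlinarith [abs_nonneg (a:ℝ)]
  refine mul_le_mul (mul_le_mul_of_nonneg_right (exp_le_exp.2 (by linarith)) (exp_pos _).le)
    (by nlinarith [abs_nonneg δ]) (by positivity) (by positivity)

lemma ae_ne_point (a : ℝ) : ∀ᵐ l : ℝ, l ≠ a := by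
  rw [ae_iff]
  simpa using measure_singleton (α := ℝ) a

lemma hasDerivAt_expneg (l : ℝ) : HasDerivAt (fun u : ℝ => exp (-u)) (-exp (-l)) l := by
  simpa using (hasDerivAt_neg l).exp

lemma integral_expneg (a b : ℝ) : ∫ l in a..b, exp (-l) = exp (-a) - exp (-b) := by
  have h : ∀ l ∈ Set.uIcc a b, HasDerivAt (fun u : ℝ => -exp (-u)) (exp (-l)) l := by
    intro l _
    simpa using (hasDerivAt_expneg l).fun_neg
  rw [intervalIntegral.integral_eq_sub_of_hasDerivAt h
    ((by fun_prop : Continuous _).intervalIntegrable _ _)]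
  ring

lemma hasDerivAt_F1 (δ l : ℝ) :
    HasDerivAt (fun u : ℝ => -(exp δ * (exp (-u) * (u - δ + 1))))
      (exp (-l) * exp δ * (l - δ)) l := by
  have h2 : HasDerivAt (fun u : ℝ => u - δ + 1) 1 l := by
    simpa using ((hasDerivAt_id l).sub_const δ).add_const 1
  have h := (((hasDerivAt_expneg l).fun_mul h2).const_mul (exp δ)).fun_neg
  refine h.congr_deriv ?_
  ring

lemma integral_F1 (δ a b : ℝ) :
    ∫ l in a..b, exp (-l) * exp δ * (l - δ)
      = exp δ * (exp (-a) * (a - δ + 1)) - exp δ * (exp (-b) * (b - δ + 1)) := by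
  rw [intervalIntegral.integral_eq_sub_of_hasDerivAt (fun l _ => hasDerivAt_F1 δ l)
    ((by fun_prop : Continuous _).intervalIntegrable _ _)]
  ring

lemma hasDerivAt_F2 (δ l : ℝ) :
    HasDerivAt (fun u : ℝ => -(exp δ * (exp (-(2*u)) * (u - δ + 1))))
      (exp (-l) * exp (-(l - δ)) * (1 + 2 * (l - δ))) l := by
  have h1 : HasDerivAt (fun u : ℝ => exp (-(2*u))) (-2 * exp (-(2*l))) l := by
    have := (((hasDerivAt_id l).const_mul (2:ℝ)).neg).exp
    simpa [mul_comm] using this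
  have h2 : HasDerivAt (fun u : ℝ => u - δ + 1) 1 l := by
    simpa using ((hasDerivAt_id l).sub_const δ).add_const 1
  have h := ((h1.fun_mul h2).const_mul (exp δ)).fun_neg
  refine h.congr_deriv ?_
  have key : exp (-l) * exp (-(l - δ)) = exp δ * exp (-(2*l)) := by
    rw [← exp_add, ← exp_add]; ring_nf
  rw [show exp (-l) * exp (-(l - δ)) * (1 + 2 * (l - δ))
      = exp (-l) * exp (-(l - δ)) * (1 + 2 * (l - δ)) from rfl]
  rw [key]; ring

lemma integral_F2 (δ a b : ℝ) :
    ∫ l in a..b, exp (-l) * exp (-(l - δ)) * (1 + 2 * (l - δ))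
      = exp δ * (exp (-(2*a)) * (a - δ + 1)) - exp δ * (exp (-(2*b)) * (b - δ + 1)) := by
  rw [intervalIntegral.integral_eq_sub_of_hasDerivAt (fun l _ => hasDerivAt_F2 δ l)
    ((by fun_prop : Continuous _).intervalIntegrable _ _)]
  ring

lemma exp_Iic (x : ℝ) :
    expMeasure 1 (Iic x) = ENNReal.ofReal (if 0 ≤ x then 1 - exp (-x) else 0) := by
  rw [expMeasure, gammaMeasure, withDensity_apply _ measurableSet_Iic]
  have h := lintegral_exponentialPDF_eq_antiDeriv one_pos x
  simpa [exponentialPDF, exponentialPDFReal, gammaPDF] using h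

lemma exp_Ioi (x : ℝ) :
    expMeasure 1 (Ioi x) = ENNReal.ofReal (if 0 ≤ x then exp (-x) else 1) := by
  haveI : IsProbabilityMeasure (expMeasure 1) := isProbabilityMeasure_expMeasure one_pos
  rw [← compl_Iic, measure_compl measurableSet_Iic (measure_ne_top _ _), measure_univ, exp_Iic]
  split_ifs with h
  · rw [← ENNReal.ofReal_one, ← ENNReal.ofReal_sub _ (sub_nonneg.2 (exp_le_one_iff.2 (by linarith)))]
    congr 1; ring
  · simp

lemma prod_le_aux (s : ℝ) :
    ((expMeasure 1).prod (expMeasure 1)) {p : ℝ × ℝ | p.1 + p.2 ≤ s}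
      = ENNReal.ofReal (if 0 ≤ s then 1 - exp (-s) - s * exp (-s) else 0) := by
  haveI : IsProbabilityMeasure (expMeasure 1) := isProbabilityMeasure_expMeasure one_pos
  have hset : MeasurableSet {p : ℝ × ℝ | p.1 + p.2 ≤ s} :=
    measurableSet_le (measurable_fst.add measurable_snd) measurable_const
  rw [Measure.prod_apply hset]
  have hsec : ∀ y : ℝ, expMeasure 1 (Prod.mk y ⁻¹' {p : ℝ × ℝ | p.1 + p.2 ≤ s})
      = ENNReal.ofReal (if 0 ≤ s - y then 1 - exp (-(s - y)) else 0) := by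
    intro y
    have h : (Prod.mk y ⁻¹' {p : ℝ × ℝ | p.1 + p.2 ≤ s}) = Iic (s - y) := by
      ext z
      simp only [mem_preimage, mem_setOf_eq, mem_Iic]
      constructor <;> intro h <;> linarith
    rw [h, exp_Iic]
  simp_rw [hsec]
  rw [show expMeasure 1 = volume.withDensity (gammaPDF 1 1) from rfl]
  rw [lintegral_withDensity_eq_lintegral_mul _
    (show Measurable (gammaPDF 1 1) from (measurable_gammaPDFReal 1 1).ennreal_ofReal)
    ((Measurable.ite (measurableSet_le measurable_const (by fun_prop)) (by fun_prop)
        measurable_const).ennreal_ofReal)]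
  have hpt : ∀ y : ℝ,
      (gammaPDF 1 1 * fun y => ENNReal.ofReal (if 0 ≤ s - y then 1 - exp (-(s - y)) else 0)) y
      = (Icc 0 s).indicator (fun y => ENNReal.ofReal (exp (-y) - exp (-s))) y := by
    intro y
    simp only [Pi.mul_apply]
    rw [show gammaPDF 1 1 y = exponentialPDF 1 y from rfl, exponentialPDF_eq]
    rw [← ENNReal.ofReal_mul (by split_ifs <;> positivity)]
    by_cases hy : 0 ≤ y
    · by_cases hys : y ≤ s
      · rw [if_pos hy, if_pos (by linarith : 0 ≤ s - y),
          Set.indicator_of_mem (mem_Icc.2 ⟨hy, hys⟩)]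
        congr 1
        have hexp : exp (-y) * exp (-(s - y)) = exp (-s) := by rw [← exp_add]; ring_nf
        rw [one_mul, show -(1 * y) = -y by ring, mul_sub, mul_one, hexp]
      · rw [if_pos hy, if_neg (show ¬ (0:ℝ) ≤ s - y from fun h => hys (by linarith)),
          Set.indicator_of_notMem (fun hmem => hys (mem_Icc.1 hmem).2)]
        simp
    · rw [if_neg hy, Set.indicator_of_notMem (fun hmem => hy (mem_Icc.1 hmem).1)]
      simp
  rw [lintegral_congr hpt, lintegral_indicator measurableSet_Icc _]
  rcases le_or_gt 0 s with hs | hs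
  · rw [if_pos hs, ← ofReal_integral_eq_lintegral_ofReal]
    · congr 1
      rw [integral_Icc_eq_integral_Ioc, ← intervalIntegral.integral_of_le hs,
        intervalIntegral.integral_sub
          ((by fun_prop : Continuous fun l : ℝ => exp (-l)).intervalIntegrable _ _)
          intervalIntegrable_const,
        integral_expneg, intervalIntegral.integral_const]
      simp only [neg_zero, exp_zero, smul_eq_mul, sub_zero]
    · exact (Continuous.integrableOn_Icc (by fun_prop))
    · refine (ae_restrict_iff' measurableSet_Icc).2 (ae_of_all _ fun y hy => ?_)
      have h2 := exp_le_exp.2 (neg_le_neg hy.2)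
      simp only [Pi.zero_apply]
      linarith
  · rw [if_neg (not_le.2 hs), Icc_eq_empty (by linarith)]
    simp

lemma Qden_key (δ x : ℝ) :
    ∫⁻ l in Iic x, ENNReal.ofReal (Qden δ l) =
      ENNReal.ofReal (1 - (if 0 ≤ x then exp (-x) else 1) *
        (if 0 ≤ x - δ then exp (-(x - δ)) * (1 + (x - δ)) else 1)) := by
  set c := min δ 0 with hc
  have hc0 : c ≤ 0 := min_le_right _ _
  have hcδ : c ≤ δ := min_le_left _ _
  rcases lt_or_ge x c with hx | hx
  · have h0 : ∀ l ∈ Iic x, ENNReal.ofReal (Qden δ l) = 0 := by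
      intro l hl
      have h1 : l < δ := lt_of_le_of_lt hl (lt_of_lt_of_le hx hcδ)
      have h2 : l < 0 := lt_of_le_of_lt hl (lt_of_lt_of_le hx hc0)
      simp [Qden, h2, not_le.2 h1]
    rw [setLIntegral_congr_fun measurableSet_Iic h0, lintegral_zero,
      if_neg (show ¬ (0:ℝ) ≤ x from not_le.2 (lt_of_lt_of_le hx hc0)),
      if_neg (show ¬ (0:ℝ) ≤ x - δ by push_neg; nlinarith [lt_of_lt_of_le hx hcδ])]
    simp
  · rw [lintegral_Iic_eq_lintegral_Iio_add_Icc _ hx]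
    have h1 : ∫⁻ l in Iio c, ENNReal.ofReal (Qden δ l) = 0 := by
      rw [setLIntegral_congr_fun measurableSet_Iio (fun l hl => ?_), lintegral_zero]
      have h1 : l < δ := lt_of_lt_of_le hl hcδ
      have h2 : l < 0 := lt_of_lt_of_le hl hc0
      simp [Qden, h2, not_le.2 h1]
    rw [h1, zero_add, ← ofReal_integral_eq_lintegral_ofReal (Qden_integrableOn δ c x)
      (ae_of_all _ fun l => Qden_nonneg δ l)]
    congr 1
    rw [integral_Icc_eq_integral_Ioc, ← intervalIntegral.integral_of_le hx]
    rcases le_or_gt 0 δ with hδ | hδ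
    · have hce : c = 0 := min_eq_right hδ
      rw [hce] at hx ⊢
      rcases le_or_gt x δ with hxd | hxd
      · have hcong : ∀ᵐ l : ℝ, l ∈ Set.uIoc (0:ℝ) x → Qden δ l = exp (-l) := by
          filter_upwards [ae_ne_point δ] with l hl hmem
          rw [Set.uIoc_of_le hx] at hmem
          obtain ⟨hl0, hlx⟩ := hmem
          have h2 : ¬ δ ≤ l := fun h => hl (le_antisymm (by linarith) h)
          simp [Qden, not_lt.2 hl0.le, h2]
        rw [intervalIntegral.integral_congr_ae hcong, integral_expneg]
        have hB : (if 0 ≤ x - δ then exp (-(x - δ)) * (1 + (x - δ)) else 1) = 1 := by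
          split_ifs with h
          · have hxe : x = δ := le_antisymm hxd (by linarith)
            simp [hxe]
          · rfl
        rw [if_pos hx, hB]
        norm_num
      · have i1 : IntervalIntegrable (Qden δ) volume 0 δ := by
          refine ((Qden_integrableOn δ 0 x).mono_set ?_).intervalIntegrable
          rw [uIcc_of_le hδ]
          exact Icc_subset_Icc le_rfl hxd.le
        have i2 : IntervalIntegrable (Qden δ) volume δ x := by
          refine ((Qden_integrableOn δ 0 x).mono_set ?_).intervalIntegrable
          rw [uIcc_of_le hxd.le]
          exact Icc_subset_Icc hδ le_rfl
        rw [← intervalIntegral.integral_add_adjacent_intervals i1 i2]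
        have p1 : ∫ l in (0:ℝ)..δ, Qden δ l = ∫ l in (0:ℝ)..δ, exp (-l) := by
          refine intervalIntegral.integral_congr_ae ?_
          filter_upwards [ae_ne_point δ] with l hl hmem
          rw [Set.uIoc_of_le hδ] at hmem
          obtain ⟨hl0, hlδ⟩ := hmem
          have h2 : ¬ δ ≤ l := fun h => hl (le_antisymm hlδ h)
          simp [Qden, not_lt.2 hl0.le, h2]
        have p2 : ∫ l in δ..x, Qden δ l
            = ∫ l in δ..x, exp (-l) * exp (-(l - δ)) * (1 + 2 * (l - δ)) := by
          refine intervalIntegral.integral_congr fun l hl => ?_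
          rw [uIcc_of_le hxd.le] at hl
          obtain ⟨hl1, hl2⟩ := hl
          simp [Qden, not_lt.2 (le_trans hδ hl1), hl1]
        rw [p1, p2, integral_expneg, integral_F2, if_pos hx, if_pos (by linarith)]
        have e1 : exp δ * exp (-(2*δ)) = exp (-δ) := by rw [← exp_add]; ring_nf
        have e2 : exp (-x) * exp (-(x - δ)) = exp δ * exp (-(2*x)) := by
          rw [← exp_add, ← exp_add]; ring_nf
        have e0 : exp (-(0:ℝ)) = 1 := by norm_num
        linear_combination e1 + (x - δ + 1) * e2 + e0
    · have hce : c = δ := min_eq_left hδ.le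
      rw [hce] at hx ⊢
      rcases lt_or_ge x 0 with hx0 | hx0
      · have p : ∫ l in δ..x, Qden δ l = ∫ l in δ..x, exp (-l) * exp δ * (l - δ) := by
          refine intervalIntegral.integral_congr fun l hl => ?_
          rw [uIcc_of_le hx] at hl
          obtain ⟨hl1, hl2⟩ := hl
          simp [Qden, lt_of_le_of_lt hl2 hx0, hl1]
        rw [p, integral_F1, if_neg (not_le.2 hx0), if_pos (by linarith)]
        have e1 : exp δ * exp (-δ) = 1 := by rw [← exp_add]; simp
        have e2 : exp (-x) * exp δ = exp (-(x - δ)) := by rw [← exp_add]; ring_nf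
        linear_combination e1 - (x - δ + 1) * e2
      · have i1 : IntervalIntegrable (Qden δ) volume δ 0 := by
          refine ((Qden_integrableOn δ δ x).mono_set ?_).intervalIntegrable
          rw [uIcc_of_le hδ.le]
          exact Icc_subset_Icc le_rfl hx0
        have i2 : IntervalIntegrable (Qden δ) volume 0 x := by
          refine ((Qden_integrableOn δ δ x).mono_set ?_).intervalIntegrable
          rw [uIcc_of_le hx0]
          exact Icc_subset_Icc hδ.le le_rfl
        rw [← intervalIntegral.integral_add_adjacent_intervals i1 i2]
        have p1 : ∫ l in δ..(0:ℝ), Qden δ l = ∫ l in δ..(0:ℝ), exp (-l) * exp δ * (l - δ) := by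
          refine intervalIntegral.integral_congr_ae ?_
          filter_upwards [ae_ne_point 0] with l hl hmem
          rw [Set.uIoc_of_le hδ.le] at hmem
          obtain ⟨hl1, hl2⟩ := hmem
          have h2 : l < 0 := lt_of_le_of_ne hl2 hl
          simp [Qden, h2, hl1.le]
        have p2 : ∫ l in (0:ℝ)..x, Qden δ l
            = ∫ l in (0:ℝ)..x, exp (-l) * exp (-(l - δ)) * (1 + 2 * (l - δ)) := by
          refine intervalIntegral.integral_congr fun l hl => ?_
          rw [uIcc_of_le hx0] at hl
          obtain ⟨hl1, hl2⟩ := hl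
          simp [Qden, not_lt.2 hl1, le_trans hδ.le hl1]
        rw [p1, p2, integral_F1, integral_F2, if_pos hx0, if_pos (by linarith)]
        have e1 : exp δ * exp (-δ) = 1 := by rw [← exp_add]; simp
        have e2 : exp (-x) * exp (-(x - δ)) = exp δ * exp (-(2*x)) := by
          rw [← exp_add, ← exp_add]; ring_nf
        have e0 : exp (-(0:ℝ)) = 1 := by norm_num
        have e0' : exp (-(2*(0:ℝ))) = 1 := by norm_num
        linear_combination e1 + (x - δ + 1) * e2 + (1 - δ) * exp δ * e0'
          - (1 - δ) * exp δ * e0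

end Aux

/-- If `X`, `Y`, `Z` are independent `Exp(1)` random variables and `δ ∈ ℝ`, then
`L = min{X, δ+Y+Z}` has probability density `l ↦ Q(δ,l)`. -/
theorem density_of_min {Ω : Type*} [MeasurableSpace Ω] (μ : Measure Ω)
    [IsProbabilityMeasure μ] (X Y Z : Ω → ℝ)
    (hX : Measurable X) (hY : Measurable Y) (hZ : Measurable Z)
    (hindep : iIndepFun ![X, Y, Z] μ)
    (hXe : Measure.map X μ = expMeasure 1)
    (hYe : Measure.map Y μ = expMeasure 1)
    (hZe : Measure.map Z μ = expMeasure 1) (δ : ℝ) :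
    Measure.map (fun ω => min (X ω) (δ + Y ω + Z ω)) μ =
      volume.withDensity fun l => ENNReal.ofReal (Qden δ l) := by
  haveI hPE : IsProbabilityMeasure (expMeasure 1) := isProbabilityMeasure_expMeasure one_pos
  have hWm : Measurable (fun ω => δ + Y ω + Z ω) := by fun_prop
  have hL : Measurable (fun ω => min (X ω) (δ + Y ω + Z ω)) := hX.min hWm
  haveI := Measure.isProbabilityMeasure_map (μ := μ) hL.aemeasurable
  have hmeas : ∀ i, Measurable (![X, Y, Z] i) := by
    intro i; fin_cases i <;> assumption
  have hXYZ : IndepFun X (Y + Z) μ :=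
    hindep.indepFun_add_right hmeas 0 1 2 (by decide) (by decide)
  have hXW : IndepFun X (fun ω => δ + Y ω + Z ω) μ := by
    have h := hXYZ.comp measurable_id (measurable_id.const_add δ)
    have hfun : ((fun a : ℝ => δ + id a) ∘ (Y + Z)) = fun ω => δ + Y ω + Z ω := by
      funext ω; simp [Function.comp, add_assoc]
    rw [hfun] at h
    simpa using h
  have hYZ : IndepFun Y Z μ := hindep.indepFun (show (1 : Fin 3) ≠ 2 by decide)
  have hpair : μ.map (fun ω => (Y ω, Z ω)) = (expMeasure 1).prod (expMeasure 1) := by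
    have h := (indepFun_iff_map_prod_eq_prod_map_map hY.aemeasurable hZ.aemeasurable).1 hYZ
    rwa [hYe, hZe] at h
  have hXtail : ∀ x : ℝ, μ (X ⁻¹' Ioi x) = ENNReal.ofReal (if 0 ≤ x then exp (-x) else 1) := by
    intro x
    rw [← Measure.map_apply hX measurableSet_Ioi, hXe, exp_Ioi]
  have hm2 : ∀ x : ℝ, MeasurableSet {p : ℝ × ℝ | p.1 + p.2 ≤ x - δ} := fun x =>
    measurableSet_le (measurable_fst.add measurable_snd) measurable_const
  have hWtail : ∀ x : ℝ, μ ((fun ω => δ + Y ω + Z ω) ⁻¹' Ioi x)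
      = ENNReal.ofReal (if 0 ≤ x - δ then exp (-(x - δ)) * (1 + (x - δ)) else 1) := by
    intro x
    have hset : ((fun ω => δ + Y ω + Z ω) ⁻¹' Ioi x)
        = (fun ω => (Y ω, Z ω)) ⁻¹' {p : ℝ × ℝ | p.1 + p.2 ≤ x - δ}ᶜ := by
      ext ω
      simp only [mem_preimage, mem_Ioi, mem_compl_iff, mem_setOf_eq, not_le]
      constructor <;> intro h <;> linarith
    rw [hset, ← Measure.map_apply (hY.prodMk hZ) (hm2 x).compl, hpair,
      measure_compl (hm2 x) (measure_ne_top _ _), measure_univ, prod_le_aux]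
    split_ifs with h
    · have h1 : exp (-(x - δ)) * exp (x - δ) = 1 := by rw [← exp_add]; simp
      have h2 : x - δ + 1 ≤ exp (x - δ) := add_one_le_exp _
      have h3 := mul_le_mul_of_nonneg_left h2 (exp_pos (-(x - δ))).le
      rw [← ENNReal.ofReal_one, ← ENNReal.ofReal_sub _ (by nlinarith)]
      congr 1; ring
    · simp
  refine Measure.ext_of_Iic (μ.map _) _ fun x => ?_
  rw [Measure.map_apply hL measurableSet_Iic, withDensity_apply _ measurableSet_Iic, Qden_key δ x]
  have hseteq : ((fun ω => min (X ω) (δ + Y ω + Z ω)) ⁻¹' Iic x)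
      = ((X ⁻¹' Ioi x) ∩ ((fun ω => δ + Y ω + Z ω) ⁻¹' Ioi x))ᶜ := by
    ext ω
    simp only [mem_preimage, mem_Iic, mem_compl_iff, mem_inter_iff, mem_Ioi, min_le_iff,
      not_and_or, not_lt]
  rw [hseteq, measure_compl ((hX measurableSet_Ioi).inter (hWm measurableSet_Ioi))
      (measure_ne_top _ _), measure_univ,
    (indepFun_iff_measure_inter_preimage_eq_mul.1 hXW) _ _ measurableSet_Ioi measurableSet_Ioi,
    hXtail, hWtail]
  have hA0 : (0:ℝ) ≤ (if 0 ≤ x then exp (-x) else 1) := by split_ifs <;> positivity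
  have hB0 : (0:ℝ) ≤ (if 0 ≤ x - δ then exp (-(x - δ)) * (1 + (x - δ)) else 1) := by
    split_ifs with h
    · positivity
    · norm_num
  rw [← ENNReal.ofReal_mul hA0, ← ENNReal.ofReal_one]
  exact (ENNReal.ofReal_sub 1 (mul_nonneg hA0 hB0)).symm
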